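/- For all positive integers δ, n with n/2 < δ < n, there exists a graph G on n vertices with minimum degree δ such that G contains at most (δ + 2 + √(n(2δ - n)))/4 edge-disjoint Hamilton cycles. -/

import Mathlib

open SimpleGraph Finset

section CycleEdgeCount

variable {V : Type*} [DecidableEq V] {G : SimpleGraph V}

lemma countP_edges_le {a b : V} (p : G.Walk a b) (x : V) :
    p.edges.countP (fun e => x ∈ e) ≤
      p.support.dropLast.count x + p.support.tail.count x := by
  induction p with
  | nil => simp
  | cons h q ih =>
    rename_i u v w
    obtain ⟨l, hl⟩ : ∃ l, q.support = v :: l := ⟨_, q.support_eq_cons⟩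
    rw [hl, List.tail_cons] at ih
    rw [Walk.edges_cons, List.countP_cons, Walk.support_cons, hl]
    simp only [List.dropLast_cons₂, List.tail_cons, List.count_cons, beq_iff_eq,
      decide_eq_true_eq]
    have key : (if x ∈ (s(u, v) : Sym2 V) then 1 else 0)
        ≤ (if u = x then 1 else 0) + (if v = x then 1 else 0) := by
      by_cases hx : x ∈ (s(u, v) : Sym2 V)
      · rw [Sym2.mem_iff] at hx
        rcases hx with rfl | rfl <;> simp
      · simp [hx]
    have hcl : (v :: l).count x = l.count x + (if v = x then 1 else 0) := by
      rw [List.count_cons]; simp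
    omega

lemma ham_countP_le_two [Fintype V] {r : V} {p : G.Walk r r}
    (hp : p.IsHamiltonianCycle) (x : V) :
    p.edges.countP (fun e => x ∈ e) ≤ 2 := by
  have h1 : p.support.tail.count x = 1 := by
    rw [← Walk.support_tail_of_not_nil p hp.1.not_nil]
    exact hp.isHamiltonian_tail x
  have h2 : p.support.dropLast.count x ≤ 1 := by
    have hne : p.support ≠ [] := p.support_ne_nil
    have hsplit : p.support = p.support.dropLast ++ [p.support.getLast hne] :=
      (List.dropLast_append_getLast hne).symm
    have hlast : p.support.getLast hne = r := p.getLast_support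
    have hcount : p.support.count x = p.support.dropLast.count x
        + (if x = r then 1 else 0) := by
      conv_lhs => rw [hsplit]
      rw [List.count_append, hlast]
      by_cases hxr : x = r <;> simp [hxr, eq_comm] <;> exact List.count_eq_zero.mpr (by simpa using hxr)
    by_cases hxr : x = r
    · have := hp.count_support_self (a := r)
      subst hxr
      simp at hcount
      omega
    · have := hp.support_count_of_ne (Ne.symm hxr)
      simp [hxr] at hcount
      omega
  calc p.edges.countP (fun e => x ∈ e)
      ≤ p.support.dropLast.count x + p.support.tail.count x := countP_edges_le p x
    _ ≤ 2 := by omega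

end CycleEdgeCount

section Circulant

lemma mem_S_iff {m c : ℕ} [NeZero m] (hcm : 2*c + 1 ≤ m) (z : ZMod m) :
    z ∈ ((Finset.Icc 1 c).image (fun j : ℕ => (j : ZMod m))) ↔ 1 ≤ z.val ∧ z.val ≤ c := by
  constructor
  · rintro hz
    simp only [Finset.mem_image, Finset.mem_Icc] at hz
    obtain ⟨j, ⟨hj1, hj2⟩, rfl⟩ := hz
    rw [ZMod.val_cast_of_lt (by omega)]
    exact ⟨hj1, hj2⟩
  · rintro ⟨h1, h2⟩
    simp only [Finset.mem_image, Finset.mem_Icc]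
    exact ⟨z.val, ⟨h1, h2⟩, ZMod.natCast_rightInverse z⟩

def circC (m c : ℕ) : SimpleGraph (ZMod m) :=
  circulantGraph (((Finset.Icc 1 c).image (fun j : ℕ => (j : ZMod m))) : Set (ZMod m))

lemma circ_neighborSet {m c : ℕ} [NeZero m] (hcm : 2*c + 1 ≤ m) (p : ZMod m) :
    (circC m c).neighborSet p
      = ↑(((Finset.Icc 1 c ∪ Finset.Icc (m-c) (m-1)).image (fun j : ℕ => p + (j : ZMod m)))) := by
  have hm : 0 < m := Nat.pos_of_ne_zero (NeZero.ne m)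
  ext w
  simp only [circC, mem_neighborSet, circulantGraph_adj, Finset.mem_coe]
  constructor
  · rintro ⟨hne, hmem | hmem⟩
    · rw [mem_S_iff hcm] at hmem
      simp only [Finset.mem_image, Finset.mem_union, Finset.mem_Icc]
      set j := (p - w).val with hj
      refine ⟨m - j, Or.inr ⟨by omega, by omega⟩, ?_⟩
      have : ((m - j : ℕ) : ZMod m) = - ((j : ℕ) : ZMod m) := by
        have : ((m - j : ℕ) : ZMod m) + ((j : ℕ) : ZMod m) = ((m : ℕ) : ZMod m) := by
          rw [← Nat.cast_add]
          congr 1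
          have : j < m := (p - w).val_lt
          omega
        simp only [ZMod.natCast_self] at this
        linear_combination this
      rw [this, hj, ZMod.natCast_rightInverse (p - w)]
      ring
    · rw [mem_S_iff hcm] at hmem
      simp only [Finset.mem_image, Finset.mem_union, Finset.mem_Icc]
      set j := (w - p).val with hj
      refine ⟨j, Or.inl ⟨hmem.1, hmem.2⟩, ?_⟩
      rw [hj, ZMod.natCast_rightInverse (w - p)]
      ring
  · intro hw
    simp only [Finset.mem_image, Finset.mem_union, Finset.mem_Icc] at hw
    obtain ⟨j, hj | hj, rfl⟩ := hw
    · have hjm : (j : ZMod m).val = j := ZMod.val_cast_of_lt (by omega)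
      constructor
      · intro hpw
        have : ((j : ℕ) : ZMod m) = 0 := by linear_combination -hpw
        rw [← ZMod.val_eq_zero, hjm] at this
        omega
      · right
        rw [mem_S_iff hcm]
        have : p + (j : ZMod m) - p = (j : ZMod m) := by ring
        rw [this, hjm]
        exact hj
    · have hjm : (j : ZMod m).val = j := ZMod.val_cast_of_lt (by omega)
      constructor
      · intro hpw
        have : ((j : ℕ) : ZMod m) = 0 := by linear_combination -hpw
        rw [← ZMod.val_eq_zero, hjm] at this
        omega
      · left
        rw [mem_S_iff hcm]
        have h1 : p - (p + (j : ZMod m)) = - (j : ZMod m) := by ring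
        have h2 : ((j : ZMod m) : ZMod m) ≠ 0 := by
          rw [Ne, ← ZMod.val_eq_zero, hjm]
          omega
        rw [h1, ZMod.neg_val, if_neg h2, hjm]
        omega

lemma circ_degree {m c : ℕ} [NeZero m] (hcm : 2*c + 1 ≤ m) (p : ZMod m) :
    ((circC m c).neighborSet p).ncard = 2*c := by
  have hm : 0 < m := Nat.pos_of_ne_zero (NeZero.ne m)
  rw [circ_neighborSet hcm, Set.ncard_coe_finset, Finset.card_image_of_injOn,
    Finset.card_union_of_disjoint]
  · rw [Nat.card_Icc, Nat.card_Icc]; omega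
  · rw [Finset.disjoint_left]
    intro j hj1 hj2
    simp only [Finset.mem_Icc] at *
    omega
  · intro j hj j' hj' hjj
    simp only [Finset.coe_union, Set.mem_union, Finset.coe_Icc, Set.mem_Icc] at hj hj'
    have h1 : j < m := by omega
    have h2 : j' < m := by omega
    have : ((j : ZMod m)) = (j' : ZMod m) := by linear_combination hjj
    have := congrArg ZMod.val this
    rwa [ZMod.val_cast_of_lt h1, ZMod.val_cast_of_lt h2] at this

end Circulant

section JoinGraph

def joinG (a m c : ℕ) : SimpleGraph (Fin a ⊕ ZMod m) where
  Adj x y := match x, y with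
    | .inl _, .inl _ => False
    | .inl _, .inr _ => True
    | .inr _, .inl _ => True
    | .inr p, .inr q => (circC m c).Adj p q
  symm := by
    constructor
    rintro (i|p) (j|q) h
    · exact h
    · trivial
    · trivial
    · exact (circC m c).adj_symm h
  loopless := by
    constructor
    rintro (i|p) h
    · exact h
    · exact (circC m c).irrefl h

def GB (a m c : ℕ) : SimpleGraph (Fin a ⊕ ZMod m) :=
  (⊥ : SimpleGraph (Fin a)) ⊕g circC m c

lemma joinG_adj_inr_inr {a m c : ℕ} {p q : ZMod m} :
    (joinG a m c).Adj (Sum.inr p) (Sum.inr q) ↔ (circC m c).Adj p q := Iff.rfl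

lemma GB_adj_inr_inr {a m c : ℕ} {p q : ZMod m} :
    (GB a m c).Adj (Sum.inr p) (Sum.inr q) ↔ (circC m c).Adj p q := by
  simp [GB]

lemma GB_nbr_inl {a m c : ℕ} (i : Fin a) :
    (GB a m c).neighborSet (Sum.inl i) = ∅ := by
  ext y
  cases y with
  | inl j => simp [GB, mem_neighborSet]
  | inr q => simp [GB, mem_neighborSet]

lemma GB_nbr_inr {a m c : ℕ} (p : ZMod m) :
    (GB a m c).neighborSet (Sum.inr p) = Sum.inr '' ((circC m c).neighborSet p) := by
  ext y
  cases y with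
  | inl j => simp [GB, mem_neighborSet]
  | inr q => simp [GB, mem_neighborSet]

lemma joinG_nbr_inl {a m c : ℕ} (i : Fin a) :
    (joinG a m c).neighborSet (Sum.inl i) = Set.range Sum.inr := by
  ext y
  cases y with
  | inl j => simp [joinG, mem_neighborSet]
  | inr q => simp [joinG, mem_neighborSet]

lemma joinG_nbr_inr {a m c : ℕ} (p : ZMod m) :
    (joinG a m c).neighborSet (Sum.inr p)
      = Set.range (Sum.inl : Fin a → Fin a ⊕ ZMod m) ∪ Sum.inr '' ((circC m c).neighborSet p) := by
  ext y
  cases y with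
  | inl j => simp [joinG, mem_neighborSet]
  | inr q => simp [joinG, mem_neighborSet]

lemma joinG_nbr_inl_ncard {a m c : ℕ} [NeZero m] (i : Fin a) :
    ((joinG a m c).neighborSet (Sum.inl i)).ncard = m := by
  rw [joinG_nbr_inl, ← Set.image_univ, Set.ncard_image_of_injective _ Sum.inr_injective,
    Set.ncard_univ, Nat.card_eq_fintype_card, ZMod.card]

lemma joinG_nbr_inr_ncard {a m c : ℕ} [NeZero m] (hcm : 2*c + 1 ≤ m) (p : ZMod m) :
    ((joinG a m c).neighborSet (Sum.inr p)).ncard = a + 2*c := by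
  rw [joinG_nbr_inr, Set.ncard_union_eq ?_ (Set.toFinite _) (Set.toFinite _)]
  · rw [← Set.image_univ, Set.ncard_image_of_injective _ Sum.inl_injective,
      Set.ncard_image_of_injective _ Sum.inr_injective, Set.ncard_univ,
      Nat.card_eq_fintype_card, Fintype.card_fin, circ_degree hcm]
  · rw [Set.disjoint_left]
    rintro z ⟨i, rfl⟩ ⟨q, _, hq⟩
    exact Sum.inl_ne_inr hq.symm

open scoped Classical in
lemma GB_edge_count {a m c : ℕ} [NeZero m] (hcm : 2*c + 1 ≤ m) :
    ((GB a m c).edgeSet).ncard = m * c := by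
  letI : DecidableRel (GB a m c).Adj := Classical.decRel _
  have hdeg1 : ∀ i : Fin a, (GB a m c).degree (Sum.inl i) = 0 := by
    intro i
    rw [← SimpleGraph.card_neighborFinset_eq_degree, neighborFinset_def,
      ← Set.ncard_eq_toFinset_card', GB_nbr_inl, Set.ncard_empty]
  have hdeg2 : ∀ p : ZMod m, (GB a m c).degree (Sum.inr p) = 2*c := by
    intro p
    rw [← SimpleGraph.card_neighborFinset_eq_degree, neighborFinset_def,
      ← Set.ncard_eq_toFinset_card', GB_nbr_inr,
      Set.ncard_image_of_injective _ Sum.inr_injective, circ_degree hcm]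
  have hsum := SimpleGraph.sum_degrees_eq_twice_card_edges (GB a m c)
  rw [Fintype.sum_sum_type] at hsum
  simp only [hdeg1, hdeg2, Finset.sum_const, Finset.card_univ,
    Fintype.card_fin, ZMod.card, smul_eq_mul, mul_zero, zero_add] at hsum
  have hfe : ((GB a m c).edgeSet).ncard = (GB a m c).edgeFinset.card := by
    rw [edgeFinset, ← Set.ncard_eq_toFinset_card']
  have h2 : m * (2*c) = 2*(m*c) := by ring
  omega

end JoinGraph


section Arith

lemma stmt3_arith (n δ : ℕ) (h1 : n < 2*δ) (h2 : δ < n) (hδ2 : 2 ≤ δ) (hn3 : 3 ≤ n) :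
    ∃ t u a m c : ℕ,
      t = Nat.sqrt (n * (2*δ - n)) ∧
      2*a + u = n ∧ a + m = n ∧ a + 2*c = δ ∧ δ ≤ m ∧
      2*c + 1 ≤ m ∧ 1 ≤ m ∧ 1 ≤ u ∧
      8*(m*c) ≤ 2*u*(δ+2+t) := by
  obtain ⟨xx, hxx⟩ : ∃ xx, 2*δ - n = xx := ⟨_, rfl⟩
  obtain ⟨r, hrr⟩ : ∃ r, n * xx = r := ⟨_, rfl⟩
  obtain ⟨t, htt⟩ : ∃ t, Nat.sqrt r = t := ⟨_, rfl⟩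
  have hx1 : 1 ≤ xx := by omega
  have hxn : xx ≤ n - 2 := by omega
  have htr : t*t ≤ r := htt ▸ Nat.sqrt_le r
  have hrt : r < (t+1)*(t+1) := htt ▸ Nat.lt_succ_sqrt r
  have hxt : xx ≤ t := by
    rw [← htt, Nat.le_sqrt, ← hrr]
    exact Nat.mul_le_mul_right xx (by omega)
  have ht1 : 1 ≤ t := by
    rw [← htt, Nat.le_sqrt, ← hrr]
    have : 1 * 1 ≤ n * xx := Nat.mul_le_mul (by omega) (by omega)
    omega
  have htn : t ≤ n - 2 := by
    have h5 : n * xx ≤ n * (n-2) := Nat.mul_le_mul_left n hxn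
    obtain ⟨k, rfl⟩ : ∃ k, n = k + 3 := ⟨n - 3, by omega⟩
    have h6 : (k+3) * ((k+3)-2) < ((k+3)-1) * ((k+3)-1) := by
      have e1 : (k+3) - 2 = k+1 := by omega
      have e2 : (k+3) - 1 = k+2 := by omega
      rw [e1, e2]
      nlinarith
    have h7 : t < (k+3) - 1 := by
      rw [← htt, Nat.sqrt_lt]
      omega
    omega
  obtain ⟨d, hdd⟩ : ∃ d, (4 - (xx + t) % 4) % 4 = d := ⟨_, rfl⟩
  have hd3 : d ≤ 3 := by omega
  have h4u : (xx + t + d) % 4 = 0 := by omega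
  refine ⟨t, t + d, (n - (t+d))/2, n - (n - (t+d))/2, (xx + (t+d))/4, htt.symm.trans (by rw [hxx, hrr]), ?_, ?_, ?_, ?_, ?_, ?_, ?_, ?_⟩
  · omega
  · omega
  · omega
  · omega
  · omega
  · omega
  · omega
  · -- 8*(m*c) ≤ 2*u*(δ+2+t)
    have hm2 : 2*(n - (n - (t+d))/2) = n + (t+d) := by omega
    have hc4 : 4*((xx + (t+d))/4) = xx + (t+d) := by omega
    have hr2 : r ≤ t*t + 2*t := by
      have : (t+1)*(t+1) = t*t + 2*t + 1 := by ring
      omega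
    have hdd4 : d*d ≤ 4*d := Nat.mul_le_mul_right d (by omega)
    have hkey : (t+d)*(t+d) + r ≤ 4*(t+d) + 2*(t+d)*t := by nlinarith
    have e1 : 8*((n - (n - (t+d))/2)*((xx + (t+d))/4))
        = (2*(n - (n - (t+d))/2))*(4*((xx + (t+d))/4)) := by ring
    rw [e1, hm2, hc4]
    have e3 : n + xx = 2*δ := by omega
    calc (n+(t+d))*(xx+(t+d)) = n*xx + (n+xx)*(t+d) + (t+d)*(t+d) := by ring
      _ = r + 2*δ*(t+d) + (t+d)*(t+d) := by rw [hrr, e3]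
      _ ≤ 2*(t+d)*(δ+2+t) := by
          have e4 : 2*(t+d)*(δ+2+t) = 2*δ*(t+d) + (4*(t+d) + 2*(t+d)*t) := by ring
          rw [e4]
          linarith

end Arith

/-- For all positive integers `δ`, `n` with `n/2 < δ < n`, there is a graph `G` on `n`
vertices with minimum degree `δ` containing at most `(δ + 2 + √(n(2δ - n)))/4`
pairwise edge-disjoint Hamilton cycles. -/
theorem stmt_3 (n δ : ℕ) (hδpos : 0 < δ) (h1 : n < 2*δ) (h2 : δ < n) :
    ∃ G : SimpleGraph (Fin n),
      (∀ v, δ ≤ (G.neighborSet v).ncard) ∧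
      (∃ v, (G.neighborSet v).ncard = δ) ∧
      ∀ (h : ℕ) (v : Fin h → Fin n) (w : ∀ i, G.Walk (v i) (v i)),
        (∀ i, (w i).IsHamiltonianCycle) →
        (∀ i j, i ≠ j → ∀ e ∈ (w i).edges, e ∉ (w j).edges) →
        (h : ℝ) ≤ ((δ : ℝ) + 2 + Real.sqrt ((n * (2*δ - n) : ℕ) : ℝ)) / 4 := by
  classical
  have hδ2 : 2 ≤ δ := by omega
  have hn3 : 3 ≤ n := by omega
  obtain ⟨t, u, a, m, c, htt, ha2, ham, hδac, hmδ, hcm, hm1, hu1, h8mc⟩ :=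
    stmt3_arith n δ h1 h2 hδ2 hn3
  haveI : NeZero m := ⟨by omega⟩
  have hcard : Fintype.card (Fin a ⊕ ZMod m) = n := by
    rw [Fintype.card_sum, Fintype.card_fin, ZMod.card]
    omega
  let e : (Fin a ⊕ ZMod m) ≃ Fin n := Fintype.equivOfCardEq (by rw [hcard, Fintype.card_fin])
  have hnb : ∀ v : Fin n, ((joinG a m c).comap e.symm.toEmbedding).neighborSet v
      = e '' ((joinG a m c).neighborSet (e.symm v)) := by
    intro v
    rw [Equiv.image_eq_preimage_symm]
    ext w
    simp [comap_adj, mem_neighborSet]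
  refine ⟨(joinG a m c).comap e.symm.toEmbedding, ?_, ?_, ?_⟩
  · -- min degree
    intro v
    rw [hnb v, Set.ncard_image_of_injective _ e.injective]
    cases hsv : e.symm v with
    | inl i => rw [joinG_nbr_inl_ncard]; omega
    | inr p => rw [joinG_nbr_inr_ncard hcm]; omega
  · -- exists vertex of degree δ
    refine ⟨e (Sum.inr 0), ?_⟩
    rw [hnb _, Set.ncard_image_of_injective _ e.injective, Equiv.symm_apply_apply,
      joinG_nbr_inr_ncard hcm]
    omega
  · -- Hamilton cycles
    intro h vv ww hham hdisj
    set iso := SimpleGraph.Iso.comap e.symm (joinG a m c) with hiso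
    set W : ∀ i : Fin h, (joinG a m c).Walk (iso (vv i)) (iso (vv i)) :=
      fun i => (ww i).map iso.toHom with hW
    have hham' : ∀ i, (W i).IsHamiltonianCycle :=
      fun i => Walk.IsHamiltonianCycle.map (f := iso.toHom) iso.toEquiv.bijective (hham i)
    have hdisj' : ∀ i j, i ≠ j → ∀ z ∈ (W i).edges, z ∉ (W j).edges := by
      intro i j hij z hzi hzj
      rw [hW] at hzi hzj
      simp only [Walk.edges_map, List.mem_map] at hzi hzj
      obtain ⟨z1, hz1, rfl⟩ := hzi
      obtain ⟨z2, hz2, hz21⟩ := hzj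
      have : z2 = z1 := Sym2.map.injective iso.injective hz21
      subst this
      exact hdisj i j hij z2 hz1 hz2
    set Ei : Fin h → Finset (Sym2 (Fin a ⊕ ZMod m)) := fun i => (W i).edges.toFinset with hEi
    have hEcard : ∀ i, (Ei i).card = n := by
      intro i
      rw [hEi]
      rw [List.toFinset_card_of_nodup (hham' i).isCycle.isCircuit.isTrail.edges_nodup,
        Walk.length_edges, (hham' i).length_eq, hcard]
    set P : Sym2 (Fin a ⊕ ZMod m) → Prop := fun z => ∀ x ∈ z, x.isRight with hP
    set Ii : Fin h → Finset (Sym2 (Fin a ⊕ ZMod m)) := fun i => (Ei i).filter P with hIi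
    have hvert : ∀ (i : Fin h) (q : Fin a),
        ((Ei i).filter (fun z => (Sum.inl q : Fin a ⊕ ZMod m) ∈ z)).card ≤ 2 := by
      intro i q
      have hsub : (Ei i).filter (fun z => (Sum.inl q : Fin a ⊕ ZMod m) ∈ z)
          ⊆ ((W i).edges.filter (fun z => decide ((Sum.inl q : Fin a ⊕ ZMod m) ∈ z))).toFinset := by
        intro z hz
        rw [Finset.mem_filter, hEi, List.mem_toFinset] at hz
        rw [List.mem_toFinset, List.mem_filter]
        exact ⟨hz.1, by simpa using hz.2⟩
      calc ((Ei i).filter (fun z => (Sum.inl q : Fin a ⊕ ZMod m) ∈ z)).card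
          ≤ ((W i).edges.filter (fun z => decide ((Sum.inl q : Fin a ⊕ ZMod m) ∈ z))).toFinset.card :=
            Finset.card_le_card hsub
        _ ≤ ((W i).edges.filter (fun z => decide ((Sum.inl q : Fin a ⊕ ZMod m) ∈ z))).length :=
            List.toFinset_card_le _
        _ = (W i).edges.countP (fun z => decide ((Sum.inl q : Fin a ⊕ ZMod m) ∈ z)) :=
            List.countP_eq_length_filter.symm
        _ ≤ 2 := ham_countP_le_two (hham' i) _
    have htouch : ∀ i, ((Ei i).filter (fun z => ¬ P z)).card ≤ 2*a := by
      intro i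
      have hsub : (Ei i).filter (fun z => ¬ P z)
          ⊆ Finset.univ.biUnion
            (fun q : Fin a => (Ei i).filter (fun z => (Sum.inl q : Fin a ⊕ ZMod m) ∈ z)) := by
        intro z hz
        rw [Finset.mem_filter] at hz
        obtain ⟨hz1, hz2⟩ := hz
        simp only [hP] at hz2
        push_neg at hz2
        obtain ⟨x, hx1, hx2⟩ := hz2
        cases x with
        | inl q =>
          rw [Finset.mem_biUnion]
          exact ⟨q, Finset.mem_univ q, Finset.mem_filter.mpr ⟨hz1, hx1⟩⟩
        | inr p => simp at hx2
      calc ((Ei i).filter (fun z => ¬ P z)).card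
          ≤ (Finset.univ.biUnion
              (fun q : Fin a => (Ei i).filter (fun z => (Sum.inl q : Fin a ⊕ ZMod m) ∈ z))).card :=
            Finset.card_le_card hsub
        _ ≤ ∑ q : Fin a, ((Ei i).filter (fun z => (Sum.inl q : Fin a ⊕ ZMod m) ∈ z)).card :=
            Finset.card_biUnion_le
        _ ≤ ∑ _q : Fin a, 2 := Finset.sum_le_sum (fun q _ => hvert i q)
        _ = 2*a := by simp [mul_comm]
    have hIcard : ∀ i, u ≤ (Ii i).card := by
      intro i
      have h5 := Finset.card_filter_add_card_filter_not (s := Ei i) (p := P)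
      have h6 := htouch i
      have h7 := hEcard i
      show u ≤ ((Ei i).filter P).card
      omega
    have hIsub : ∀ i, Ii i ⊆ (GB a m c).edgeFinset := by
      intro i z hz
      simp only [hIi, Finset.mem_filter, hEi, List.mem_toFinset] at hz
      obtain ⟨hz1, hz2⟩ := hz
      have hz3 : z ∈ (joinG a m c).edgeSet := (W i).edges_subset_edgeSet hz1
      rw [SimpleGraph.mem_edgeFinset]
      induction z with
      | _ x y =>
        rw [SimpleGraph.mem_edgeSet] at hz3 ⊢
        have hxr : x.isRight := hz2 x (Sym2.mem_mk_left x y)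
        have hyr : y.isRight := hz2 y (Sym2.mem_mk_right x y)
        obtain ⟨p, rfl⟩ := Sum.isRight_iff.mp hxr
        obtain ⟨q, rfl⟩ := Sum.isRight_iff.mp hyr
        rw [GB_adj_inr_inr]
        rw [joinG_adj_inr_inr] at hz3
        exact hz3
    have hIdisj : ∀ i ∈ (Finset.univ : Finset (Fin h)), ∀ j ∈ Finset.univ, i ≠ j →
        Disjoint (Ii i) (Ii j) := by
      intro i _ j _ hij
      rw [Finset.disjoint_left]
      intro z hzi hzj
      simp only [hIi, Finset.mem_filter, hEi, List.mem_toFinset] at hzi hzj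
      exact hdisj' i j hij z hzi.1 hzj.1
    have hmain : h * u ≤ m * c := by
      calc h * u = ∑ _i : Fin h, u := by simp [mul_comm]
        _ ≤ ∑ i : Fin h, (Ii i).card := Finset.sum_le_sum (fun i _ => hIcard i)
        _ = (Finset.univ.biUnion Ii).card := (Finset.card_biUnion hIdisj).symm
        _ ≤ (GB a m c).edgeFinset.card :=
            Finset.card_le_card (Finset.biUnion_subset.mpr (fun i _ => hIsub i))
        _ = ((GB a m c).edgeSet).ncard := by rw [edgeFinset, ← Set.ncard_eq_toFinset_card']
        _ = m * c := GB_edge_count hcm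
    have hsqrt : (t : ℝ) ≤ Real.sqrt ((n * (2*δ - n) : ℕ) : ℝ) := by
      rw [htt]
      exact Real.nat_sqrt_le_real_sqrt
    have hnat : 8*(h*u) ≤ 2*u*(δ+2+t) := le_trans (Nat.mul_le_mul_left 8 hmain) h8mc
    have hreal : 8*((h:ℝ)*u) ≤ 2*u*((δ:ℝ)+2+t) := by exact_mod_cast hnat
    have hu0 : (0:ℝ) < u := by exact_mod_cast hu1
    have h3 : 8*((h:ℝ)*u) ≤ 2*u*((δ:ℝ)+2+Real.sqrt ((n * (2*δ - n) : ℕ) : ℝ)) := by nlinarith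
    have h4 : (h:ℝ) * u ≤ (((δ:ℝ)+2+Real.sqrt ((n * (2*δ - n) : ℕ) : ℝ))/4) * u := by
      have e5 : (((δ:ℝ)+2+Real.sqrt ((n * (2*δ - n) : ℕ) : ℝ))/4) * u
          = (2*u*((δ:ℝ)+2+Real.sqrt ((n * (2*δ - n) : ℕ) : ℝ)))/8 := by ring
      rw [e5]
      linarith
    exact le_of_mul_le_mul_right h4 hu0
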